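/- Every traceless symmetric real 3×3 matrix Q satisfies √6·|tr(Q³)| ≤ |Q|³, where |Q|² = tr(Q²). -/

import Mathlib

open Matrix

lemma stmt_4_key (a b c : ℝ) (h : a + b + c = 0) :
    6 * (a ^ 3 + b ^ 3 + c ^ 3) ^ 2 ≤ (a ^ 2 + b ^ 2 + c ^ 2) ^ 3 := by
  have hc : c = -(a + b) := by linarith
  subst hc
  nlinarith [sq_nonneg ((a - b) * (2 * a + b) * (a + 2 * b)), sq_nonneg (a + b),
    sq_nonneg (a - b)]

/-- Every traceless symmetric real 3×3 matrix `Q` satisfies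
`√6 |tr Q³| ≤ |Q|³`, where `|Q|` is the Frobenius norm, `|Q|² = tr Q²`. -/
theorem stmt_4 (Q : Matrix (Fin 3) (Fin 3) ℝ) (hsym : Qᵀ = Q) (htr : Q.trace = 0) :
    Real.sqrt 6 * |(Q * Q * Q).trace| ≤ Real.sqrt ((Q * Q).trace) ^ 3 := by
  have hQ : Q.IsHermitian := by
    rw [IsHermitian, conjTranspose]
    ext i j
    simpa using congrFun (congrFun hsym i) j
  set U : Matrix (Fin 3) (Fin 3) ℝ := (hQ.eigenvectorUnitary : Matrix (Fin 3) (Fin 3) ℝ) with hUdef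
  set f : Fin 3 → ℝ := RCLike.ofReal ∘ hQ.eigenvalues with hf
  have hspec : Q = U * diagonal f * star U := hQ.spectral_theorem
  have hU : star U * U = 1 := Matrix.mem_unitaryGroup_iff'.mp hQ.eigenvectorUnitary.2
  have h2 : (Q * Q).trace = ∑ i, f i ^ 2 := by
    rw [hspec]
    rw [show U * diagonal f * star U * (U * diagonal f * star U)
        = U * (diagonal f * (star U * U) * diagonal f) * star U by noncomm_ring]
    rw [hU, mul_one, diagonal_mul_diagonal, trace_mul_cycle, hU, one_mul, trace_diagonal]
    exact Finset.sum_congr rfl fun i _ => (sq (f i)).symm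
  have h3 : (Q * Q * Q).trace = ∑ i, f i ^ 3 := by
    rw [hspec]
    rw [show U * diagonal f * star U * (U * diagonal f * star U) * (U * diagonal f * star U)
        = U * (diagonal f * (star U * U) * diagonal f * (star U * U) * diagonal f) * star U
        by noncomm_ring]
    rw [hU, mul_one, mul_one, diagonal_mul_diagonal, diagonal_mul_diagonal,
      trace_mul_cycle, hU, one_mul, trace_diagonal]
    exact Finset.sum_congr rfl fun i _ => by ring
  have h1 : ∑ i, f i = 0 := by
    have := htr
    rw [hspec, trace_mul_cycle, hU, one_mul, trace_diagonal] at this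
    exact this
  rw [h2, h3, Fin.sum_univ_three, Fin.sum_univ_three]
  have hsum : f 0 + f 1 + f 2 = 0 := by simpa [Fin.sum_univ_three] using h1
  set T := f 0 ^ 3 + f 1 ^ 3 + f 2 ^ 3 with hT
  set S := f 0 ^ 2 + f 1 ^ 2 + f 2 ^ 2 with hS
  have hS0 : 0 ≤ S := by positivity
  have hkey : 6 * T ^ 2 ≤ S ^ 3 := stmt_4_key _ _ _ hsum
  have hL : 0 ≤ Real.sqrt 6 * |T| := by positivity
  have hR : 0 ≤ Real.sqrt S ^ 3 := by positivity
  have hfin : (Real.sqrt 6 * |T|) ^ 2 ≤ (Real.sqrt S ^ 3) ^ 2 := by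
    have e1 : (Real.sqrt 6 * |T|) ^ 2 = 6 * T ^ 2 := by
      rw [mul_pow, Real.sq_sqrt (by norm_num : (0:ℝ) ≤ 6), sq_abs]
    have e2 : (Real.sqrt S ^ 3) ^ 2 = S ^ 3 := by
      rw [← pow_mul, show 3 * 2 = 2 * 3 by norm_num, pow_mul, Real.sq_sqrt hS0]
    rw [e1, e2]; exact hkey
  nlinarith [hfin, hL, hR]
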